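/- With D, D₁, D₂ as above, let F = cone D, F₁ = cone(D₁ ∪ D), F₂ = cone(D₂ ∪ D) in ℝ⁵. Then F₁ ∩ F₂ = F. -/

import Mathlib

/-- The convex conic hull of a set in `ℝ⁵`. -/
def coneHull (S : Set (EuclideanSpace ℝ (Fin 5))) : Set (EuclideanSpace ℝ (Fin 5)) :=
  {x | ∃ c : ℝ, 0 ≤ c ∧ ∃ y ∈ convexHull ℝ S, x = c • y}

/-- The disk `D = {(1,x,y,0,0) : x² + (y-1)² ≤ 1}`. -/
def diskD : Set (EuclideanSpace ℝ (Fin 5)) :=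
  {v | v 0 = 1 ∧ (v 1) ^ 2 + (v 2 - 1) ^ 2 ≤ 1 ∧ v 3 = 0 ∧ v 4 = 0}

/-- The set `D₁ = {(1,x,y,0,0) : x³ - (y-1)³ ≤ 1, x ≥ 0, 0 ≤ y ≤ 1}`. -/
def setD1 : Set (EuclideanSpace ℝ (Fin 5)) :=
  {v | v 0 = 1 ∧ (v 1) ^ 3 - (v 2 - 1) ^ 3 ≤ 1 ∧ 0 ≤ v 1 ∧ 0 ≤ v 2 ∧ v 2 ≤ 1 ∧
    v 3 = 0 ∧ v 4 = 0}

/-- The set `D₂ = {(1,x,y,0,0) : -x³ - (y-1)³ ≤ 1, x ≤ 0, 0 ≤ y ≤ 1}`. -/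
def setD2 : Set (EuclideanSpace ℝ (Fin 5)) :=
  {v | v 0 = 1 ∧ -(v 1) ^ 3 - (v 2 - 1) ^ 3 ≤ 1 ∧ v 1 ≤ 0 ∧ 0 ≤ v 2 ∧ v 2 ≤ 1 ∧
    v 3 = 0 ∧ v 4 = 0}

lemma lin5 (a b c d e : ℝ) : IsLinearMap ℝ (fun v : EuclideanSpace ℝ (Fin 5) =>
    a * v 0 + b * v 1 + c * v 2 + d * v 3 + e * v 4) := by
  constructor
  · intro x y; simp [PiLp.add_apply]; ring
  · intro m x; simp [PiLp.smul_apply, smul_eq_mul]; ring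

lemma cone_le {S : Set (EuclideanSpace ℝ (Fin 5))} (a b c d e : ℝ)
    (h : ∀ v ∈ S, a * v 0 + b * v 1 + c * v 2 + d * v 3 + e * v 4 ≤ 0) :
    ∀ p ∈ coneHull S, a * p 0 + b * p 1 + c * p 2 + d * p 3 + e * p 4 ≤ 0 := by
  rintro p ⟨cc, hcc, y, hy, rfl⟩
  have hy' : a * y 0 + b * y 1 + c * y 2 + d * y 3 + e * y 4 ≤ 0 :=
    convexHull_min h (convex_halfSpace_le (lin5 a b c d e) 0) hy
  have : ∀ i, (cc • y) i = cc * y i := fun i => rfl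
  simp only [this]
  nlinarith [mul_nonpos_of_nonneg_of_nonpos hcc hy']

/-- Proposition 4.4: with `F = cone D`, `F₁ = cone(D₁ ∪ D)` and `F₂ = cone(D₂ ∪ D)`,
we have `F₁ ∩ F₂ = F`. -/
theorem stmt18 :
    coneHull (setD1 ∪ diskD) ∩ coneHull (setD2 ∪ diskD) = coneHull diskD := by
  ext p
  constructor
  · rintro ⟨h1, h2⟩
    set l := p 0 with hl0
    set x := p 1 with hx0
    set y := p 2 with hy0
    -- coordinate facts
    have hl : 0 ≤ l := by
      have := cone_le (-1) 0 0 0 0 (by rintro v (⟨hv0,_⟩|⟨hv0,_⟩) <;> simp [hv0]) p h1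
      linarith
    have hp3 : p 3 = 0 := by
      have hA := cone_le 0 0 0 1 0 (by rintro v (⟨_,_,_,_,_,hv3,_⟩|⟨_,_,hv3,_⟩) <;> simp [hv3]) p h1
      have hB := cone_le 0 0 0 (-1) 0 (by rintro v (⟨_,_,_,_,_,hv3,_⟩|⟨_,_,hv3,_⟩) <;> simp [hv3]) p h1
      linarith
    have hp4 : p 4 = 0 := by
      have hA := cone_le 0 0 0 0 1 (by rintro v (⟨_,_,_,_,_,_,hv4⟩|⟨_,_,_,hv4⟩) <;> simp [hv4]) p h1
      have hB := cone_le 0 0 0 0 (-1) (by rintro v (⟨_,_,_,_,_,_,hv4⟩|⟨_,_,_,hv4⟩) <;> simp [hv4]) p h1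
      linarith
    -- tangent inequalities
    have key1 : ∀ a b : ℝ, a ≤ 0 → a^2 + b^2 ≤ 1 → a * x + b * y - (1+b) * l ≤ 0 := by
      intro a b ha hab
      have := cone_le (-(1+b)) a b 0 0 ?_ p h1
      · linarith
      rintro v (⟨hv0, _, hvx, hvy0, hvy1, _, _⟩|⟨hv0, hvd, _, _⟩)
      · rw [hv0]
        nlinarith [mul_nonpos_of_nonpos_of_nonneg ha hvx, sq_nonneg (b*(1 - v 2)+1),
          sq_nonneg b, mul_nonneg (sub_nonneg.2 hvy1) (sub_nonneg.2 hvy1)]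
      · rw [hv0]
        nlinarith [sq_nonneg (a - v 1), sq_nonneg (b - (v 2 - 1))]
    have key2 : ∀ a b : ℝ, 0 ≤ a → a^2 + b^2 ≤ 1 → a * x + b * y - (1+b) * l ≤ 0 := by
      intro a b ha hab
      have := cone_le (-(1+b)) a b 0 0 ?_ p h2
      · linarith
      rintro v (⟨hv0, _, hvx, hvy0, hvy1, _, _⟩|⟨hv0, hvd, _, _⟩)
      · rw [hv0]
        nlinarith [mul_nonpos_of_nonneg_of_nonpos ha hvx, sq_nonneg (b*(1 - v 2)+1),
          sq_nonneg b, mul_nonneg (sub_nonneg.2 hvy1) (sub_nonneg.2 hvy1)]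
      · rw [hv0]
        nlinarith [sq_nonneg (a - v 1), sq_nonneg (b - (v 2 - 1))]
    -- the main estimate
    have hmain : x^2 + (y - l)^2 ≤ l^2 := by
      set r := Real.sqrt (x^2 + (y-l)^2) with hr
      have hrsq : r^2 = x^2 + (y-l)^2 := Real.sq_sqrt (by positivity)
      rcases eq_or_lt_of_le (Real.sqrt_nonneg (x^2 + (y-l)^2) : (0:ℝ) ≤ r) with h0 | hrpos
      · nlinarith
      · have hrl : r ≤ l := by
          have hab : (x/r)^2 + ((y-l)/r)^2 ≤ 1 := by
            have hs : (0:ℝ) < x^2 + (y-l)^2 := Real.sqrt_pos.mp hrpos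
            rw [div_pow, div_pow, ← add_div, hrsq, div_self hs.ne']
          have hval : (x/r) * x + ((y-l)/r) * y - (1 + (y-l)/r) * l ≤ 0 := by
            rcases le_or_gt x 0 with hx | hx
            · exact key1 _ _ (div_nonpos_of_nonpos_of_nonneg hx hrpos.le) hab
            · exact key2 _ _ (div_nonneg hx.le hrpos.le) hab
          have hrne : r ≠ 0 := ne_of_gt hrpos
          have hval' : x * x + ((y-l) * y - (r + (y-l)) * l) ≤ 0 := by
            have := mul_le_mul_of_nonneg_right hval hrpos.le
            calc x * x + ((y-l) * y - (r + (y-l)) * l)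
                = (x / r * x + (y - l) / r * y - (1 + (y - l) / r) * l) * r := by
                  field_simp; ring
            _ ≤ 0 * r := mul_le_mul_of_nonneg_right hval hrpos.le
            _ = 0 := zero_mul r
          nlinarith [hrsq, hrpos]
        nlinarith
    -- conclude
    rcases eq_or_lt_of_le hl with h0 | hlpos
    · have hx : x = 0 := by nlinarith
      have hy : y = 0 := by nlinarith
      refine ⟨0, le_refl 0, (show EuclideanSpace ℝ (Fin 5) from !₂[1,0,1,0,0]),
        subset_convexHull ℝ _ ?_, ?_⟩
      · exact ⟨by norm_num [diskD], by show (0:ℝ)^2 + ((1:ℝ) - 1)^2 ≤ 1; norm_num, by rfl, by rfl⟩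
      · ext i
        have hz : ((0:ℝ) • (show EuclideanSpace ℝ (Fin 5) from !₂[1,0,1,0,0])) i = 0 := by
          show (0:ℝ) * _ = 0; ring
        rw [hz]
        fin_cases i
        · exact h0.symm
        · exact hx
        · exact hy
        · exact hp3
        · exact hp4
    · refine ⟨l, hl, l⁻¹ • p, subset_convexHull ℝ _ ?_, (smul_inv_smul₀ hlpos.ne' p).symm⟩
      have hco : ∀ i, (l⁻¹ • p) i = l⁻¹ * p i := fun i => rfl
      have hinv : l⁻¹ * l = 1 := inv_mul_cancel₀ hlpos.ne'
      have hinvnn : (0:ℝ) ≤ l⁻¹ := inv_nonneg.2 hl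
      refine ⟨?_, ?_, ?_, ?_⟩
      · rw [hco]; exact mul_comm l⁻¹ (p 0) ▸ mul_inv_cancel₀ hlpos.ne'
      · rw [hco, hco]
        show (l⁻¹ * x)^2 + (l⁻¹ * y - 1)^2 ≤ 1
        have e1 : l⁻¹ * y - 1 = l⁻¹ * (y - l) := by rw [mul_sub, hinv]
        have e2 : (l⁻¹ * x)^2 + (l⁻¹ * (y - l))^2 = (l⁻¹)^2 * (x^2 + (y-l)^2) := by ring
        rw [e1, e2]
        calc (l⁻¹)^2 * (x^2 + (y-l)^2) ≤ (l⁻¹)^2 * l^2 :=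
              mul_le_mul_of_nonneg_left hmain (sq_nonneg _)
        _ = (l⁻¹ * l)^2 := by ring
        _ = 1 := by rw [hinv]; norm_num
      · rw [hco, hp3]; ring
      · rw [hco, hp4]; ring
  · rintro ⟨c, hc, y, hy, rfl⟩
    exact ⟨⟨c, hc, y, convexHull_mono Set.subset_union_right hy, rfl⟩,
      ⟨c, hc, y, convexHull_mono Set.subset_union_right hy, rfl⟩⟩
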